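/- If T_1,...,T_n are independent [0,∞]-valued random variables, then R_S(t) = Σ_{A⊆[n]} m_v(A) · Π_{i∈A} R_i(t), i.e., the system reliability equals the primal Möbius form (reliability polynomial) evaluated at the component reliabilities. -/

import Mathlib

open scoped ENNReal
open Finset

/-- The Möbius transform of a set function `v : 2^[n] → ℤ`. -/
def mobiusTransform {n : ℕ} (v : Finset (Fin n) → ℤ) (A : Finset (Fin n)) : ℤ :=
  ∑ B ∈ A.powerset, (-1) ^ (A.card - B.card) * v B


lemma mobius_inner {n : ℕ} {C B : Finset (Fin n)} (hB : B ⊆ C) :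
    ∑ A ∈ C.powerset.filter (fun A => B ⊆ A), (-1:ℤ) ^ (A.card - B.card)
      = if B = C then 1 else 0 := by
  classical
  have key : ∑ A ∈ C.powerset.filter (fun A => B ⊆ A), (-1:ℤ) ^ (A.card - B.card)
      = ∑ D ∈ (C \ B).powerset, (-1:ℤ) ^ D.card := by
    refine Finset.sum_nbij' (fun A => A \ B) (fun D => B ∪ D) ?_ ?_ ?_ ?_ ?_
    · intro A hA
      rw [mem_filter, mem_powerset] at hA
      exact mem_powerset.2 (sdiff_subset_sdiff hA.1 le_rfl)
    · intro D hD
      rw [mem_powerset] at hD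
      rw [mem_filter, mem_powerset]
      exact ⟨union_subset hB (hD.trans sdiff_subset), subset_union_left⟩
    · intro A hA
      rw [mem_filter] at hA
      exact union_sdiff_of_subset hA.2
    · intro D hD
      rw [mem_powerset] at hD
      exact union_sdiff_cancel_left (disjoint_sdiff.mono_right hD)
    · intro A hA
      rw [mem_filter] at hA
      rw [card_sdiff_of_subset hA.2]
  rw [key, Finset.sum_powerset_neg_one_pow_card]
  by_cases h : B = C
  · simp [h]
  · rw [if_neg h, if_neg]
    intro hc
    exact h (subset_antisymm hB (sdiff_eq_empty_iff_subset.1 hc))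

lemma mobius_sum_eq {n : ℕ} (v : Finset (Fin n) → ℤ) (C : Finset (Fin n)) :
    ∑ A ∈ C.powerset, mobiusTransform v A = v C := by
  classical
  unfold mobiusTransform
  rw [Finset.sum_comm' (s' := fun B => C.powerset.filter (fun A => B ⊆ A))
      (t' := C.powerset) (fun A B => by
        simp only [mem_powerset, mem_filter, mem_powerset]
        constructor
        · rintro ⟨h1, h2⟩; exact ⟨⟨h1, h2⟩, h2.trans h1⟩
        · rintro ⟨⟨h1, h2⟩, h3⟩; exact ⟨h1, h2⟩)]
  calc ∑ B ∈ C.powerset, ∑ A ∈ C.powerset.filter (fun A => B ⊆ A),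
          (-1:ℤ) ^ (A.card - B.card) * v B
      = ∑ B ∈ C.powerset, if B = C then v B else 0 := by
        refine Finset.sum_congr rfl fun B hB => ?_
        rw [← Finset.sum_mul, mobius_inner (mem_powerset.1 hB)]
        split <;> simp
    _ = v C := by
        rw [Finset.sum_ite_eq' C.powerset C (fun B => v B)]
        simp

/-- Reliability polynomial for independent component lifetimes:
`R_S(t) = Σ_A m_v(A) Π_{i∈A} R_i(t)`. -/
theorem reliability_indep_mobius {n : ℕ} {Ω : Type*} [MeasurableSpace Ω]
    (μ : MeasureTheory.Measure Ω) [MeasureTheory.IsProbabilityMeasure μ]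
    (T : Fin n → Ω → ℝ≥0∞) (hT : ∀ i, Measurable (T i))
    (hindep : ProbabilityTheory.iIndepFun T μ)
    (v : Finset (Fin n) → ℤ)
    (hv : ∀ A, v A = 0 ∨ v A = 1)
    (hmono : ∀ A B : Finset (Fin n), A ⊆ B → v A ≤ v B)
    (hnonconst : ∃ A B : Finset (Fin n), v A ≠ v B)
    (t : ℝ≥0∞) (ht : 0 ≤ t) :
    (μ {ω | (Finset.univ.filter (fun A : Finset (Fin n) => v A = 1)).sup
        (fun A => A.inf (fun i => T i ω)) > t}).toReal =
      ∑ A : Finset (Fin n), (mobiusTransform v A : ℝ) *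
        ∏ i ∈ A, (μ {ω | T i ω > t}).toReal := by
  classical
  set B : Ω → Finset (Fin n) := fun ω => Finset.univ.filter (fun i => t < T i ω) with hBdef
  -- v ∅ = 0
  have hv0 : v ∅ = 0 := by
    rcases hv ∅ with h | h
    · exact h
    · exfalso
      obtain ⟨A, A', hAA⟩ := hnonconst
      have h1 : ∀ A, v A = 1 := fun A => le_antisymm
        (by rcases hv A with h' | h' <;> omega) (h ▸ hmono ∅ A (empty_subset A))
      exact hAA (by rw [h1, h1])
  -- membership in B
  have hmemB : ∀ ω i, i ∈ B ω ↔ t < T i ω := by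
    intro ω i; simp [hBdef]
  -- measurability of {B = C}
  have hmeasB : ∀ C : Finset (Fin n), MeasurableSet {ω | B ω = C} := by
    intro C
    have hset : {ω | B ω = C}
        = ⋂ i : Fin n, (if i ∈ C then T i ⁻¹' Set.Ioi t else (T i ⁻¹' Set.Ioi t)ᶜ) := by
      ext ω
      simp only [Set.mem_setOf_eq, Set.mem_iInter, Finset.ext_iff, hmemB]
      constructor
      · intro h i
        by_cases hi : i ∈ C
        · simpa [hi] using (h i).mpr hi
        · simp only [hi, if_neg, Set.mem_compl_iff, Set.mem_preimage, Set.mem_Ioi]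
          exact fun hlt => hi ((h i).mp hlt)
      · intro h i
        by_cases hi : i ∈ C
        · have := h i
          rw [if_pos hi] at this
          exact ⟨fun _ => hi, fun _ => this⟩
        · have := h i
          rw [if_neg hi] at this
          exact ⟨fun hlt => absurd hlt this, fun hc => absurd hc hi⟩
    rw [hset]
    refine MeasurableSet.iInter fun i => ?_
    by_cases hi : i ∈ C
    · rw [if_pos hi]; exact (hT i) measurableSet_Ioi
    · rw [if_neg hi]; exact ((hT i) measurableSet_Ioi).compl
  -- decomposition of events defined by predicates on B
  have hdecomp : ∀ (P : Finset (Fin n) → Prop) [DecidablePred P],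
      μ {ω | P (B ω)} = ∑ C ∈ Finset.univ.filter P, μ {ω | B ω = C} := by
    intro P _
    have hset : {ω | P (B ω)} = ⋃ C ∈ Finset.univ.filter P, {ω | B ω = C} := by
      ext ω
      simp only [Set.mem_setOf_eq, Set.mem_iUnion, mem_filter, mem_univ, true_and]
      exact ⟨fun h => ⟨B ω, h, rfl⟩, fun ⟨C, hC, hEq⟩ => hEq ▸ hC⟩
    rw [hset, MeasureTheory.measure_biUnion_finset ?_ (fun C _ => hmeasB C)]
    intro C _ C' _ hne
    simp only [Function.onFun, Set.disjoint_left, Set.mem_setOf_eq]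
    intro ω h1 h2
    exact hne (h1 ▸ h2 ▸ rfl)
  set q : Finset (Fin n) → ℝ := fun C => (μ {ω | B ω = C}).toReal with hq
  -- independence: probability of A ⊆ B ω
  have hind : ∀ A : Finset (Fin n),
      μ {ω | A ⊆ B ω} = ∏ i ∈ A, μ {ω | T i ω > t} := by
    intro A
    have h1 : {ω | A ⊆ B ω} = ⋂ i ∈ A, T i ⁻¹' Set.Ioi t := by
      ext ω
      simp only [Set.mem_setOf_eq, Set.mem_iInter, Set.mem_preimage, Set.mem_Ioi,
        Finset.subset_iff, hmemB]
    have h2 := hindep.measure_inter_preimage_eq_mul A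
      (sets := fun _ => Set.Ioi t) (fun i _ => measurableSet_Ioi)
    rw [h1, h2]
    rfl
  -- LHS event rewriting
  have hLHS : {ω | (Finset.univ.filter (fun A : Finset (Fin n) => v A = 1)).sup
      (fun A => A.inf (fun i => T i ω)) > t} = {ω | v (B ω) = 1} := by
    ext ω
    simp only [Set.mem_setOf_eq, gt_iff_lt, Finset.lt_sup_iff, mem_filter, mem_univ, true_and]
    constructor
    · rintro ⟨A, hA1, hinf⟩
      have hsub : A ⊆ B ω := fun i hi =>
        (hmemB ω i).mpr (lt_of_lt_of_le hinf (Finset.inf_le hi))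
      rcases hv (B ω) with h | h
      · exfalso
        have := hmono A (B ω) hsub
        omega
      · exact h
    · intro h
      by_cases htop : t = ⊤
      · exfalso
        have hBe : B ω = ∅ := by
          ext i
          simp [hmemB, htop]
        rw [hBe, hv0] at h
        exact one_ne_zero h.symm
      · exact ⟨B ω, h, (Finset.lt_inf_iff (lt_top_iff_ne_top.mpr htop)).mpr
          (fun i hi => (hmemB ω i).mp hi)⟩
  rw [hLHS, hdecomp (fun C => v C = 1), ENNReal.toReal_sum (fun C _ => MeasureTheory.measure_ne_top μ _)]
  -- RHS: rewrite each term
  have hRA : ∀ A : Finset (Fin n),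
      ∏ i ∈ A, (μ {ω | T i ω > t}).toReal = ∑ C ∈ Finset.univ.filter (fun C => A ⊆ C), q C := by
    intro A
    rw [← ENNReal.toReal_prod, ← hind A, hdecomp (fun C => A ⊆ C),
      ENNReal.toReal_sum (fun C _ => MeasureTheory.measure_ne_top μ _)]
  calc ∑ C ∈ Finset.univ.filter (fun C => v C = 1), q C
      = ∑ C : Finset (Fin n), (v C : ℝ) * q C := by
        rw [Finset.sum_filter]
        refine Finset.sum_congr rfl fun C _ => ?_
        rcases hv C with h | h <;> simp [h]
    _ = ∑ C : Finset (Fin n), ∑ A ∈ C.powerset, (mobiusTransform v A : ℝ) * q C := by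
        refine Finset.sum_congr rfl fun C _ => ?_
        rw [← Finset.sum_mul]
        congr 1
        push_cast [← mobius_sum_eq v C]
        rfl
    _ = ∑ A : Finset (Fin n), ∑ C ∈ Finset.univ.filter (fun C => A ⊆ C),
          (mobiusTransform v A : ℝ) * q C := by
        exact Finset.sum_comm' (fun C A => by
          simp only [mem_univ, true_and, and_true, mem_filter, mem_powerset])
    _ = ∑ A : Finset (Fin n), (mobiusTransform v A : ℝ) *
          ∏ i ∈ A, (μ {ω | T i ω > t}).toReal := by
        refine Finset.sum_congr rfl fun A _ => ?_
        rw [hRA A, Finset.mul_sum]
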